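/- Let A and B be strictly increasing lists over a linear order with no element of A equal to an element of B, and let t be any value. Then merging A and B (with respect to ≤) equals the concatenation of the merge of the sublists of elements ≤ t with the merge of the sublists of elements > t: merge A B = merge (A.filter (· ≤ t)) (B.filter (· ≤ t)) ++ merge (A.filter (t < ·)) (B.filter (t < ·)). Hence merging two sorted sequences chunk by chunk, cutting both sequences at a common threshold, produces the same result as merging them entirely. -/

import Mathlib

/-- merging two strictly sorted, disjoint lists can be done chunk by chunk:
cutting both lists at a common threshold `t` and concatenating the merge of the lower
parts with the merge of the upper parts yields the merge of the whole lists. -/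
theorem merge_eq_merge_filter_append_merge_filter {α : Type*} [LinearOrder α]
    (A B : List α) (hA : A.Pairwise (· < ·)) (hB : B.Pairwise (· < ·))
    (hdisj : ∀ x ∈ A, x ∉ B) (t : α) :
    A.merge B =
      (A.filter (fun x => x ≤ t)).merge (B.filter (fun x => x ≤ t)) ++
        (A.filter (fun x => t < x)).merge (B.filter (fun x => t < x)) := by
  have hpred : (fun x : α => !decide (x ≤ t)) = fun x => decide (t < x) := by
    funext x; simp [← decide_not, not_lt]
  have key : ∀ l : List α,
      List.Perm (l.filter (fun x => x ≤ t) ++ l.filter (fun x => t < x)) l := by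
    intro l
    have := List.filter_append_perm (fun x => decide (x ≤ t)) l
    rwa [hpred] at this
  have hA' : A.Pairwise (· ≤ ·) := hA.imp le_of_lt
  have hB' : B.Pairwise (· ≤ ·) := hB.imp le_of_lt
  refine (fun h s1 s2 => List.Perm.eq_of_pairwise' s1 s2 h) ?_ (hA'.merge hB') ?_
  · refine List.Perm.symm ?_
    refine ((List.merge_perm_append ..).append (List.merge_perm_append ..)).trans ?_
    refine List.Perm.trans ?_ (List.merge_perm_append ..).symm
    refine List.Perm.trans ?_ ((key A).append (key B))
    simp only [List.append_assoc]
    refine List.Perm.append_left _ ?_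
    rw [← List.append_assoc, ← List.append_assoc]
    exact List.perm_append_comm.append_right _
  · rw [List.pairwise_append]
    refine ⟨(hA'.filter _).merge (hB'.filter _), (hA'.filter _).merge (hB'.filter _), ?_⟩
    intro x hx y hy
    rw [List.mem_merge] at hx hy
    have hx' : x ≤ t := by
      rcases hx with h | h <;> simpa using (List.mem_filter.mp h).2
    have hy' : t < y := by
      rcases hy with h | h <;> simpa using (List.mem_filter.mp h).2
    exact hx'.trans hy'.le
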